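/- Let h : (0,∞) → (0,∞) be differentiable and suppose that t ↦ −t·h'(t)/h(t) is strictly increasing on (0,∞). Then for any b > 1, the function t ↦ h(bt)/h(t) is strictly decreasing on (0,∞). -/
import Mathlib


open Set

theorem stmt_19 (h : ℝ → ℝ)
    (hpos : ∀ t > (0:ℝ), 0 < h t)
    (hdiff : ∀ t > (0:ℝ), DifferentiableAt ℝ h t)
    (hmono : StrictMonoOn (fun t => -t * deriv h t / h t) (Ioi 0))
    (b : ℝ) (hb : 1 < b) :
    StrictAntiOn (fun t => h (b * t) / h t) (Ioi 0) := by
  have hb0 : (0:ℝ) < b := lt_trans one_pos hb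
  have key : ∀ t ∈ interior (Ioi (0:ℝ)),
      HasDerivAt (fun t => h (b * t) / h t)
        ((deriv h (b * t) * b * h t - h (b * t) * deriv h t) / (h t)^2) t ∧
      (deriv h (b * t) * b * h t - h (b * t) * deriv h t) / (h t)^2 < 0 := by
    intro t ht
    rw [interior_Ioi] at ht
    have htpos : (0:ℝ) < t := ht
    have hbt : (0:ℝ) < b * t := mul_pos hb0 htpos
    have h1 : HasDerivAt (fun t => h (b * t)) (deriv h (b * t) * b) t :=
      ((hdiff (b * t) hbt).hasDerivAt).comp t (by simpa using (hasDerivAt_id t).const_mul b)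
    have h2 : HasDerivAt h (deriv h t) t := (hdiff t htpos).hasDerivAt
    have ht0 := hpos t htpos
    have hbt0 := hpos (b * t) hbt
    refine ⟨h1.div h2 (ne_of_gt ht0), ?_⟩
    have hlt : t < b * t := by nlinarith
    have hm := hmono (mem_Ioi.mpr htpos) (mem_Ioi.mpr hbt) hlt
    simp only [] at hm
    rw [div_lt_div_iff₀ ht0 hbt0] at hm
    apply div_neg_of_neg_of_pos
    · nlinarith
    · positivity
  apply strictAntiOn_of_deriv_neg (convex_Ioi 0)
  · intro t ht
    rw [← interior_Ioi] at ht
    exact ((key t ht).1.continuousAt).continuousWithinAt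
  · intro t ht
    rw [(key t ht).1.deriv]
    exact (key t ht).2
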